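/- Let n, k, N, m ≥ 1, let X = {x_1,…,x_n}, Z = {z_1,…,z_m}, and Y = {y_1,…,y_N}. Consider the polynomial P = ∏_{i=1}^n ∏_{j=1}^m (x_i + z_j) · Δ(X)^{2k}, viewed as a polynomial in x_1,…,x_n with coefficients in ℤ[z_1,…,z_m]. Applying to P the linear map sending each monomial x_1^{d_1}⋯x_n^{d_n} to ∏_{i=1}^n Λ^{d_i − m}(Y) (coefficients in the z's carried along multiplicatively) yields ∑_{(σ_1,…,σ_{2k}) ∈ (S_n)^{2k}} sign(σ_1)⋯sign(σ_{2k}) · ∏_{i=1}^n Λ^{(σ_1(i)−1)+⋯+(σ_{2k}(i)−1)}(Y ∪ Z), where Λ^p(Y ∪ Z) is the p-th elementary symmetric polynomial in the N+m variables y_1,…,y_N,z_1,…,z_m. That is, (1/n!)∫_Y ( ∏_i x_i^{−m} ∏_{i,j}(x_i+z_j) Δ(X)^{2k} ) = H^k_n(Y+Z). -/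

import Mathlib

/-- The scaled hyperdeterminant `DET` of a `k`-th order hypermatrix. -/
noncomputable def DET {R : Type*} [CommRing R] (n k : ℕ)
    (M : (Fin k → Fin n) → R) : R :=
  ∑ σ : Fin k → Equiv.Perm (Fin n),
    (∏ s, (Equiv.Perm.sign (σ s) : ℤ)) • ∏ i, M (fun s => σ s i)

/-- The `p`-th elementary symmetric polynomial of the alphabet `Y` (the first
`N` of the `N + m` variables), vanishing for `p < 0` and `p > N`. -/
noncomputable def ΛY (N m : ℕ) (p : ℤ) : MvPolynomial (Fin (N + m)) ℤ :=
  if 0 ≤ p then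
    MvPolynomial.rename (Fin.castAdd m) (MvPolynomial.esymm (Fin N) ℤ p.toNat)
  else 0

/-- The `p`-th elementary symmetric polynomial of the full alphabet `Y ∪ Z`
of `N + m` variables, vanishing for `p < 0` and `p > N + m`. -/
noncomputable def ΛYZ (N m : ℕ) (p : ℤ) : MvPolynomial (Fin (N + m)) ℤ :=
  if 0 ≤ p then MvPolynomial.esymm (Fin (N + m)) ℤ p.toNat else 0

/-- The Vandermonde polynomial `Δ(X)` in `x_1, …, x_n` with coefficients in
`ℤ[z_1,…,z_m]`. -/
noncomputable def vandermondeZ (n m : ℕ) :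
    MvPolynomial (Fin n) (MvPolynomial (Fin m) ℤ) :=
  ∏ p ∈ Finset.univ.filter (fun p : Fin n × Fin n => p.1 < p.2),
    (MvPolynomial.X p.1 - MvPolynomial.X p.2)


open Finset MvPolynomial

open Finset MvPolynomial

lemma esymm_eq_zero_of_card_lt {σ R : Type*} [CommSemiring R] [Fintype σ] [DecidableEq σ] {p : ℕ}
    (h : Fintype.card σ < p) : MvPolynomial.esymm σ R p = 0 := by
  rw [MvPolynomial.esymm, Finset.powersetCard_eq_empty.2 (by simpa using h), Finset.sum_empty]

lemma coeff_prod_one_add_C_mul_X {σ R : Type*} [CommSemiring R] [DecidableEq σ]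
    (s : Finset σ) (r : σ → R) (k : ℕ) :
    (∏ i ∈ s, (1 + Polynomial.C (r i) * Polynomial.X)).coeff k
      = ∑ t ∈ s.powersetCard k, ∏ i ∈ t, r i := by
  induction s using Finset.induction generalizing k with
  | empty =>
      cases k with
      | zero => simp
      | succ j =>
          rw [Finset.powersetCard_eq_empty.2 (by simp)]
          simp [Polynomial.coeff_one]
  | @insert a s ha ih =>
      rw [Finset.prod_insert ha, add_mul, one_mul, Polynomial.coeff_add, ih,
        mul_assoc, Polynomial.coeff_C_mul]
      cases k with
      | zero =>
          simp [Finset.powersetCard_zero]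
      | succ j =>
          rw [Polynomial.coeff_X_mul, ih, Finset.powersetCard_succ_insert ha,
            Finset.sum_union ?dis, Finset.sum_image ?inj]
          · rw [Finset.mul_sum]
            congr 1
            refine Finset.sum_congr rfl fun t ht => ?_
            have hat : a ∉ t := fun hc =>
              ha ((Finset.mem_powersetCard.1 ht).1 hc)
            rw [Finset.prod_insert hat]
          case inj =>
            intro t1 h1 t2 h2 h
            have h1' : a ∉ t1 := fun hc => ha ((Finset.mem_powersetCard.1 h1).1 hc)
            have h2' : a ∉ t2 := fun hc => ha ((Finset.mem_powersetCard.1 h2).1 hc)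
            have := congrArg (Finset.erase · a) h
            simpa [Finset.erase_insert h1', Finset.erase_insert h2'] using this
          case dis =>
            refine Finset.disjoint_left.2 fun t ht hti => ?_
            have : a ∉ t := fun hc => ha ((Finset.mem_powersetCard.1 ht).1 hc)
            rcases Finset.mem_image.1 hti with ⟨u, hu, rfl⟩
            exact this (Finset.mem_insert_self a u)

lemma rename_esymm_eq {σ τ R : Type*} [CommSemiring R] [Fintype σ] [DecidableEq σ]
    (f : σ → τ) (p : ℕ) :
    MvPolynomial.rename f (MvPolynomial.esymm σ R p)
      = ∑ t ∈ Finset.powersetCard p (Finset.univ : Finset σ), ∏ i ∈ t, MvPolynomial.X (f i) := by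
  simp [MvPolynomial.esymm, map_sum, map_prod]

lemma esymm_convolution (N m a : ℕ) :
    (MvPolynomial.esymm (Fin (N + m)) ℤ a)
      = ∑ pc ∈ Finset.HasAntidiagonal.antidiagonal a,
          MvPolynomial.rename (Fin.castAdd m) (MvPolynomial.esymm (Fin N) ℤ pc.1) *
            MvPolynomial.rename (Fin.natAdd N) (MvPolynomial.esymm (Fin m) ℤ pc.2) := by
  have h1 : (∏ w : Fin (N + m),
        (1 + Polynomial.C (MvPolynomial.X w : MvPolynomial (Fin (N + m)) ℤ) * Polynomial.X))
      = (∏ i : Fin N, (1 + Polynomial.C (MvPolynomial.X (Fin.castAdd m i) :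
            MvPolynomial (Fin (N + m)) ℤ) * Polynomial.X))
        * ∏ j : Fin m, (1 + Polynomial.C (MvPolynomial.X (Fin.natAdd N j) :
            MvPolynomial (Fin (N + m)) ℤ) * Polynomial.X) :=
    Fin.prod_univ_add _
  have h2 := congrArg (fun q => Polynomial.coeff q a) h1
  simp only [Polynomial.coeff_mul] at h2
  rw [coeff_prod_one_add_C_mul_X] at h2
  calc MvPolynomial.esymm (Fin (N + m)) ℤ a
      = ∑ t ∈ Finset.powersetCard a (Finset.univ : Finset (Fin (N + m))),
          ∏ i ∈ t, MvPolynomial.X i := rfl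
    _ = _ := by
        rw [h2]
        refine Finset.sum_congr rfl fun pc _ => ?_
        rw [coeff_prod_one_add_C_mul_X, coeff_prod_one_add_C_mul_X,
          rename_esymm_eq, rename_esymm_eq]

lemma key_single (N m a : ℕ) :
    ∑ c ∈ Finset.range (m + 1),
        MvPolynomial.rename (Fin.natAdd N) (MvPolynomial.esymm (Fin m) ℤ c) *
          ΛY N m ((a : ℤ) - (c : ℤ))
      = ΛYZ N m (a : ℤ) := by
  set W : ℕ → MvPolynomial (Fin (N + m)) ℤ := fun c =>
    if c ≤ a then
      MvPolynomial.rename (Fin.natAdd N) (MvPolynomial.esymm (Fin m) ℤ c) *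
        MvPolynomial.rename (Fin.castAdd m) (MvPolynomial.esymm (Fin N) ℤ (a - c))
    else 0 with hW
  have hWzero : ∀ c, m < c → W c = 0 := by
    intro c hc
    rw [hW]
    by_cases h : c ≤ a
    · simp only [if_pos h]
      rw [esymm_eq_zero_of_card_lt (by simpa using hc), map_zero, zero_mul]
    · simp [h]
  have hL : ∑ c ∈ Finset.range (m + 1),
      MvPolynomial.rename (Fin.natAdd N) (MvPolynomial.esymm (Fin m) ℤ c) *
        ΛY N m ((a : ℤ) - (c : ℤ)) = ∑ c ∈ Finset.range (m + 1), W c := by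
    refine Finset.sum_congr rfl fun c _ => ?_
    rw [ΛY]
    simp only [hW]
    by_cases h : c ≤ a
    · rw [if_pos (by omega : (0:ℤ) ≤ (a : ℤ) - (c : ℤ))]
      simp only [if_pos h]
      rw [show ((a:ℤ) - (c:ℤ)).toNat = a - c by omega]
    · rw [if_neg (by omega : ¬ (0:ℤ) ≤ (a : ℤ) - (c : ℤ)), mul_zero]
      simp [h]
  have hR : ΛYZ N m (a : ℤ) = ∑ c ∈ Finset.range (a + 1), W c := by
    rw [ΛYZ, if_pos (by positivity), Int.toNat_natCast, esymm_convolution,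
      Finset.Nat.sum_antidiagonal_eq_sum_range_succ_mk,
      ← Finset.sum_range_reflect (fun p =>
        MvPolynomial.rename (Fin.castAdd m) (MvPolynomial.esymm (Fin N) ℤ p) *
          MvPolynomial.rename (Fin.natAdd N) (MvPolynomial.esymm (Fin m) ℤ (a - p)))]
    refine Finset.sum_congr rfl fun j hj => ?_
    have hj' : j ≤ a := Nat.lt_succ_iff.mp (Finset.mem_range.mp hj)
    simp only [hW, if_pos hj']
    rw [show a + 1 - 1 - j = a - j by omega, show a - (a - j) = j by omega, mul_comm]
  rw [hL, hR]
  have e1 : ∑ c ∈ Finset.range (m + 1), W c = ∑ c ∈ Finset.range (a + m + 1), W c :=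
    Finset.sum_subset (Finset.range_subset_range.2 (by omega)) (fun c hc hc' => by
      refine hWzero c ?_
      simp only [Finset.mem_range] at hc hc'
      omega)
  have e2 : ∑ c ∈ Finset.range (a + 1), W c = ∑ c ∈ Finset.range (a + m + 1), W c :=
    Finset.sum_subset (Finset.range_subset_range.2 (by omega)) (fun c hc hc' => by
      simp only [Finset.mem_range] at hc hc'
      rw [hW]
      exact if_neg (by omega))
  rw [e1, e2]

noncomputable def Tm (n N m : ℕ) (d : Fin n →₀ ℕ) (c : MvPolynomial (Fin m) ℤ) :
    MvPolynomial (Fin (N + m)) ℤ :=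
  MvPolynomial.rename (Fin.natAdd N) c * ∏ i, ΛY N m ((d i : ℤ) - (m : ℤ))

noncomputable def Tfun (n N m : ℕ) (P : MvPolynomial (Fin n) (MvPolynomial (Fin m) ℤ)) :
    MvPolynomial (Fin (N + m)) ℤ :=
  ∑ d ∈ P.support, Tm n N m d (MvPolynomial.coeff d P)

lemma Tm_zero (n N m : ℕ) (d : Fin n →₀ ℕ) : Tm n N m d 0 = 0 := by
  rw [Tm, map_zero, zero_mul]

lemma Tm_add (n N m : ℕ) (d : Fin n →₀ ℕ) (c₁ c₂ : MvPolynomial (Fin m) ℤ) :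
    Tm n N m d (c₁ + c₂) = Tm n N m d c₁ + Tm n N m d c₂ := by
  rw [Tm, Tm, Tm, map_add, add_mul]

lemma Tfun_eq_sum_subset (n N m : ℕ) (P : MvPolynomial (Fin n) (MvPolynomial (Fin m) ℤ))
    (s : Finset (Fin n →₀ ℕ)) (hs : P.support ⊆ s) :
    Tfun n N m P = ∑ d ∈ s, Tm n N m d (MvPolynomial.coeff d P) := by
  refine Finset.sum_subset hs fun d _ hd => ?_
  rw [MvPolynomial.notMem_support_iff.1 hd, Tm_zero]

lemma Tfun_add (n N m : ℕ) (P Q : MvPolynomial (Fin n) (MvPolynomial (Fin m) ℤ)) :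
    Tfun n N m (P + Q) = Tfun n N m P + Tfun n N m Q := by
  classical
  rw [Tfun_eq_sum_subset n N m (P + Q) (P.support ∪ Q.support)
      MvPolynomial.support_add,
    Tfun_eq_sum_subset n N m P (P.support ∪ Q.support) Finset.subset_union_left,
    Tfun_eq_sum_subset n N m Q (P.support ∪ Q.support) Finset.subset_union_right,
    ← Finset.sum_add_distrib]
  exact Finset.sum_congr rfl fun d _ => by rw [MvPolynomial.coeff_add, Tm_add]

lemma Tfun_zero (n N m : ℕ) : Tfun n N m 0 = 0 := by
  simp [Tfun]

lemma Tfun_sum {ι : Type*} (n N m : ℕ) (s : Finset ι)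
    (f : ι → MvPolynomial (Fin n) (MvPolynomial (Fin m) ℤ)) :
    Tfun n N m (∑ x ∈ s, f x) = ∑ x ∈ s, Tfun n N m (f x) := by
  classical
  induction s using Finset.induction with
  | empty => simp [Tfun_zero]
  | @insert a s ha ih =>
      rw [Finset.sum_insert ha, Finset.sum_insert ha, Tfun_add, ih]

lemma Tfun_zsmul (n N m : ℕ) (z : ℤ) (P : MvPolynomial (Fin n) (MvPolynomial (Fin m) ℤ)) :
    Tfun n N m (z • P) = z • Tfun n N m P := by
  rw [Tfun_eq_sum_subset n N m (z • P) P.support (MvPolynomial.support_smul),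
    Tfun, Finset.smul_sum]
  refine Finset.sum_congr rfl fun d _ => ?_
  rw [MvPolynomial.coeff_smul, Tm, Tm, map_zsmul, smul_mul_assoc]

lemma Tfun_monomial (n N m : ℕ) (d : Fin n →₀ ℕ) (c : MvPolynomial (Fin m) ℤ) :
    Tfun n N m (MvPolynomial.monomial d c) = Tm n N m d c := by
  classical
  rcases eq_or_ne c 0 with rfl | hc
  · rw [map_zero, Tfun_zero, Tm_zero]
  · rw [Tfun, MvPolynomial.support_monomial, if_neg hc, Finset.sum_singleton,
      MvPolynomial.coeff_monomial, if_pos rfl]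

lemma equivFunOnFinite_symm_apply {α M : Type*} [Finite α] [Zero M] (e : α → M) (x : α) :
    (Finsupp.equivFunOnFinite.symm e) x = e x := rfl

lemma prod_X_add_C_expand (n m : ℕ) (i : Fin n) :
    (∏ j : Fin m, (MvPolynomial.X i + MvPolynomial.C (MvPolynomial.X j) :
        MvPolynomial (Fin n) (MvPolynomial (Fin m) ℤ)))
      = ∑ c ∈ Finset.range (m + 1),
          MvPolynomial.C (MvPolynomial.esymm (Fin m) ℤ c) * MvPolynomial.X i ^ (m - c) := by
  have h := MvPolynomial.prod_C_add_X_eq_sum_esymm (σ := Fin m) (R := ℤ)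
  have h2 := congrArg (Polynomial.aeval (MvPolynomial.X i :
      MvPolynomial (Fin n) (MvPolynomial (Fin m) ℤ))) h
  simpa [map_prod, map_sum, Polynomial.aeval_C, MvPolynomial.algebraMap_eq, add_comm] using h2

lemma prod_X_pow_univ (n : ℕ) {R : Type*} [CommSemiring R] (e : Fin n → ℕ) :
    (∏ i, (MvPolynomial.X i : MvPolynomial (Fin n) R) ^ e i)
      = MvPolynomial.monomial (Finsupp.equivFunOnFinite.symm e) 1 := by
  classical
  rw [← MvPolynomial.prod_X_pow_eq_monomial]
  simp only [equivFunOnFinite_symm_apply]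
  exact (Finset.prod_subset (Finset.subset_univ (Finsupp.equivFunOnFinite.symm e).support)
    (fun x _ hx => by
      have h0 : e x = 0 := by
        have := Finsupp.notMem_support_iff.1 hx
        rwa [equivFunOnFinite_symm_apply] at this
      rw [h0, pow_zero])).symm

lemma Tfun_G (n N m : ℕ) (a : Fin n → ℕ) :
    Tfun n N m (∏ i, (MvPolynomial.X i ^ a i *
        ∏ j : Fin m, (MvPolynomial.X i + MvPolynomial.C (MvPolynomial.X j))))
      = ∏ i, ΛYZ N m ((a i : ℤ)) := by
  classical
  have hexp : ∀ i : Fin n,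
      (MvPolynomial.X i ^ a i *
          ∏ j : Fin m, (MvPolynomial.X i + MvPolynomial.C (MvPolynomial.X j)) :
        MvPolynomial (Fin n) (MvPolynomial (Fin m) ℤ))
        = ∑ c ∈ Finset.range (m + 1),
            MvPolynomial.C (MvPolynomial.esymm (Fin m) ℤ c) * MvPolynomial.X i ^ (a i + (m - c)) := by
    intro i
    rw [prod_X_add_C_expand, Finset.mul_sum]
    refine Finset.sum_congr rfl fun c _ => ?_
    rw [pow_add]
    ring
  simp_rw [hexp]
  rw [Finset.prod_univ_sum]
  rw [Tfun_sum]
  have hterm : ∀ g ∈ Fintype.piFinset (fun _ : Fin n => Finset.range (m + 1)),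
      Tfun n N m (∏ i, MvPolynomial.C (MvPolynomial.esymm (Fin m) ℤ (g i)) *
          MvPolynomial.X i ^ (a i + (m - g i)))
        = ∏ i, (MvPolynomial.rename (Fin.natAdd N) (MvPolynomial.esymm (Fin m) ℤ (g i)) *
            ΛY N m ((a i : ℤ) - (g i : ℤ))) := by
    intro g hg
    have hgle : ∀ i, g i ≤ m := fun i => by
      have := Fintype.mem_piFinset.1 hg i
      simpa [Nat.lt_succ_iff] using this
    rw [Finset.prod_mul_distrib,
      ← map_prod (MvPolynomial.C : MvPolynomial (Fin m) ℤ →+* MvPolynomial (Fin n) (MvPolynomial (Fin m) ℤ)),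
      prod_X_pow_univ, MvPolynomial.C_mul_monomial, mul_one, Tfun_monomial, Tm, map_prod,
      ← Finset.prod_mul_distrib]
    refine Finset.prod_congr rfl fun i _ => ?_
    congr 2
    rw [equivFunOnFinite_symm_apply]
    have := hgle i
    push_cast [Nat.cast_sub this]
    ring
  rw [Finset.sum_congr rfl hterm,
    ← Finset.prod_univ_sum (fun _ : Fin n => Finset.range (m + 1))
      (fun i c => MvPolynomial.rename (Fin.natAdd N) (MvPolynomial.esymm (Fin m) ℤ c) *
        ΛY N m ((a i : ℤ) - (c : ℤ)))]
  exact Finset.prod_congr rfl fun i _ => key_single N m (a i)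

lemma prod_pairs {M : Type*} [CommMonoid M] (n : ℕ) (f : Fin n → Fin n → M) :
    ∏ p ∈ Finset.univ.filter (fun p : Fin n × Fin n => p.1 < p.2), f p.1 p.2
      = ∏ i, ∏ j ∈ Finset.Ioi i, f i j := by
  rw [← Finset.prod_sigma (Finset.univ : Finset (Fin n)) (fun i => Finset.Ioi i)
    (fun x => f x.1 x.2)]
  refine Finset.prod_nbij' (fun p => ⟨p.1, p.2⟩) (fun x => (x.1, x.2)) ?_ ?_ ?_ ?_ ?_
  · intro p hp
    simp only [Finset.mem_filter] at hp
    simp [Finset.mem_sigma, Finset.mem_Ioi, hp.2]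
  · intro x hx
    simp only [Finset.mem_sigma, Finset.mem_Ioi] at hx
    simp [hx.2]
  · intro p _; rfl
  · intro x _; rfl
  · intro p _; rfl

lemma det_vdm_expand (n m K : ℕ) :
    Matrix.det (Matrix.vandermonde (fun i : Fin n =>
        (MvPolynomial.X i : MvPolynomial (Fin n) (MvPolynomial (Fin m) ℤ)))) ^ K
      = ∑ σ : Fin K → Equiv.Perm (Fin n),
          (∏ s, (Equiv.Perm.sign (σ s) : ℤ)) •
            ∏ i, (MvPolynomial.X i : MvPolynomial (Fin n) (MvPolynomial (Fin m) ℤ))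
              ^ (∑ s, (σ s i : ℕ)) := by
  classical
  have hdet : Matrix.det (Matrix.vandermonde (fun i : Fin n =>
      (MvPolynomial.X i : MvPolynomial (Fin n) (MvPolynomial (Fin m) ℤ))))
      = ∑ σ : Equiv.Perm (Fin n),
          ((Equiv.Perm.sign σ : ℤ) : MvPolynomial (Fin n) (MvPolynomial (Fin m) ℤ)) *
            ∏ i, MvPolynomial.X i ^ ((σ i : Fin n) : ℕ) := by
    rw [← Matrix.det_transpose, Matrix.det_apply']
    refine Finset.sum_congr rfl fun σ _ => rfl
  rw [hdet, ← Fin.prod_const K, Finset.prod_univ_sum]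
  rw [Fintype.piFinset_univ]
  refine Finset.sum_congr rfl fun g _ => ?_
  rw [Finset.prod_mul_distrib, ← Int.cast_prod, zsmul_eq_mul]
  congr 1
  rw [Finset.prod_comm]
  refine Finset.prod_congr rfl fun i _ => ?_
  rw [Finset.prod_pow_eq_pow_sum]

lemma vandermondeZ_pow (n m k : ℕ) :
    vandermondeZ n m ^ (2 * k)
      = ∑ σ : Fin (2 * k) → Equiv.Perm (Fin n),
          (∏ s, (Equiv.Perm.sign (σ s) : ℤ)) •
            ∏ i, (MvPolynomial.X i : MvPolynomial (Fin n) (MvPolynomial (Fin m) ℤ))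
              ^ (∑ s, (σ s i : ℕ)) := by
  classical
  rw [← det_vdm_expand n m (2 * k)]
  have hv : vandermondeZ n m
      = (∏ i : Fin n, ∏ j ∈ Finset.Ioi i, (-1 : MvPolynomial (Fin n) (MvPolynomial (Fin m) ℤ))) *
        Matrix.det (Matrix.vandermonde (fun i : Fin n =>
          (MvPolynomial.X i : MvPolynomial (Fin n) (MvPolynomial (Fin m) ℤ)))) := by
    rw [Matrix.det_vandermonde, vandermondeZ,
      prod_pairs n (fun i j => (MvPolynomial.X i - MvPolynomial.X j :
        MvPolynomial (Fin n) (MvPolynomial (Fin m) ℤ))), ← Finset.prod_mul_distrib]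
    refine Finset.prod_congr rfl fun i _ => ?_
    rw [← Finset.prod_mul_distrib]
    refine Finset.prod_congr rfl fun j _ => ?_
    ring
  rw [hv, mul_pow]
  have hu : (∏ i : Fin n, ∏ j ∈ Finset.Ioi i,
      (-1 : MvPolynomial (Fin n) (MvPolynomial (Fin m) ℤ))) ^ (2 * k) = 1 := by
    rw [pow_mul]
    have : (∏ i : Fin n, ∏ j ∈ Finset.Ioi i,
        (-1 : MvPolynomial (Fin n) (MvPolynomial (Fin m) ℤ))) ^ 2 = 1 := by
      rw [← Finset.prod_pow]
      refine Finset.prod_eq_one fun i _ => ?_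
      rw [← Finset.prod_pow]
      exact Finset.prod_eq_one fun j _ => by ring
    rw [this, one_pow]
  
  rw [hu, one_mul]

/-- Applying to `P = ∏_{i,j} (x_i + z_j) ⋅ Δ(X)^{2k}` the substitution sending
each monomial `x_1^{d_1} ⋯ x_n^{d_n}` to `∏_i Λ^{d_i−m}(Y)` (coefficients in
the `z`'s carried along) yields the Hankel hyperdeterminant of the union
alphabet: `(1/n!) ∫_Y ∏_i x_i^{−m} ∏_{i,j}(x_i+z_j) Δ(X)^{2k} = H^k_n(Y+Z)`. -/
theorem intY_sum_alphabet (n k N m : ℕ)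
    (hn : 1 ≤ n) (hk : 1 ≤ k) (hN : 1 ≤ N) (hm : 1 ≤ m) :
    (∑ d ∈ ((∏ i : Fin n, ∏ j : Fin m,
          (MvPolynomial.X i + MvPolynomial.C (MvPolynomial.X j))) *
            vandermondeZ n m ^ (2 * k)).support,
        MvPolynomial.rename (Fin.natAdd N)
          (MvPolynomial.coeff d ((∏ i : Fin n, ∏ j : Fin m,
            (MvPolynomial.X i + MvPolynomial.C (MvPolynomial.X j))) *
              vandermondeZ n m ^ (2 * k))) *
          ∏ i, ΛY N m ((d i : ℤ) - (m : ℤ)))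
      = DET n (2 * k) (fun i => ΛYZ N m (∑ s, ((i s : ℕ) : ℤ))) := by
  classical
  have hL : (∑ d ∈ ((∏ i : Fin n, ∏ j : Fin m,
          (MvPolynomial.X i + MvPolynomial.C (MvPolynomial.X j))) *
            vandermondeZ n m ^ (2 * k)).support,
        MvPolynomial.rename (Fin.natAdd N)
          (MvPolynomial.coeff d ((∏ i : Fin n, ∏ j : Fin m,
            (MvPolynomial.X i + MvPolynomial.C (MvPolynomial.X j))) *
              vandermondeZ n m ^ (2 * k))) *
          ∏ i, ΛY N m ((d i : ℤ) - (m : ℤ)))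
      = Tfun n N m ((∏ i : Fin n, ∏ j : Fin m,
          (MvPolynomial.X i + MvPolynomial.C (MvPolynomial.X j))) *
            vandermondeZ n m ^ (2 * k)) := rfl
  rw [hL, vandermondeZ_pow, Finset.mul_sum]
  have hterm : ∀ σ : Fin (2 * k) → Equiv.Perm (Fin n),
      (∏ i : Fin n, ∏ j : Fin m,
          (MvPolynomial.X i + MvPolynomial.C (MvPolynomial.X j) :
            MvPolynomial (Fin n) (MvPolynomial (Fin m) ℤ))) *
        ((∏ s, (Equiv.Perm.sign (σ s) : ℤ)) •
          ∏ i, MvPolynomial.X i ^ (∑ s, ((σ s i : Fin n) : ℕ)))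
      = (∏ s, (Equiv.Perm.sign (σ s) : ℤ)) •
          ∏ i, (MvPolynomial.X i ^ (∑ s, ((σ s i : Fin n) : ℕ)) *
            ∏ j : Fin m, (MvPolynomial.X i + MvPolynomial.C (MvPolynomial.X j))) := by
    intro σ
    rw [mul_smul_comm]
    congr 1
    rw [← Finset.prod_mul_distrib]
    exact Finset.prod_congr rfl fun i _ => mul_comm _ _
  rw [Finset.sum_congr rfl fun σ _ => hterm σ, Tfun_sum]
  rw [DET]
  refine Finset.sum_congr rfl fun σ _ => ?_
  rw [Tfun_zsmul, Tfun_G]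
  congr 1
  refine Finset.prod_congr rfl fun i _ => ?_
  congr 1
  push_cast
  rfl
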